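/- arXiv:1303.1293 — 3 statements merged into one kernel-verified Lean document; each statement's English description precedes it below -/
import Mathlib

section
/- Let a: ℤ → ℂ be a sequence with a(k) ≠ 0 for all k and with nonzero limits a(+∞) = lim_{k→+∞} a(k) and a(−∞) = lim_{k→−∞} a(k). If λ ∈ ℂ satisfies |λ| > max{|a(+∞)|, |a(−∞)|}, then the operator aW − λI on l²(ℤ), where (aW u)(k) = a(k)u(k+1), is invertible. -/
open Filter Topology
open scoped ENNReal

namespace Stmt6Aux

noncomputable section

abbrev E := lp (fun _ : ℤ => ℂ) 2

lemma memℓp_of_bound (u : E) (g : ℤ → ℂ) (σ : ℤ ≃ ℤ) {C : ℝ} (hC : 0 ≤ C)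
    (h : ∀ k, ‖g k‖ ≤ C * ‖u (σ k)‖) : Memℓp g 2 := by
  have hp : 0 < (2 : ℝ≥0∞).toReal := by norm_num
  rw [memℓp_gen_iff hp]
  have hs : Summable fun k : ℤ => ‖u k‖ ^ (2 : ℝ≥0∞).toReal := (lp.memℓp u).summable hp
  have hs2 : Summable fun k : ℤ => ‖u (σ k)‖ ^ (2 : ℝ≥0∞).toReal :=
    (σ.summable_iff (f := fun k : ℤ => ‖u k‖ ^ (2 : ℝ≥0∞).toReal)).2 hs
  refine Summable.of_nonneg_of_le (fun k => Real.rpow_nonneg (norm_nonneg _) _)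
    (fun k => ?_) (hs2.mul_left (C ^ (2 : ℝ≥0∞).toReal))
  calc ‖g k‖ ^ (2 : ℝ≥0∞).toReal ≤ (C * ‖u (σ k)‖) ^ (2 : ℝ≥0∞).toReal :=
        Real.rpow_le_rpow (norm_nonneg _) (h k) (by norm_num)
    _ = C ^ (2 : ℝ≥0∞).toReal * ‖u (σ k)‖ ^ (2 : ℝ≥0∞).toReal :=
        Real.mul_rpow hC (norm_nonneg _)

lemma norm_le_of_bound (u : E) (v : E) (σ : ℤ ≃ ℤ) {C : ℝ} (hC : 0 ≤ C)
    (h : ∀ k, ‖v k‖ ≤ C * ‖u (σ k)‖) : ‖v‖ ≤ C * ‖u‖ := by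
  have hp : 0 < (2 : ℝ≥0∞).toReal := by norm_num
  refine lp.norm_le_of_tsum_le hp (by positivity) ?_
  have hs : Summable fun k : ℤ => ‖u k‖ ^ (2 : ℝ≥0∞).toReal := (lp.memℓp u).summable hp
  have hs2 : Summable fun k : ℤ => ‖u (σ k)‖ ^ (2 : ℝ≥0∞).toReal :=
    (σ.summable_iff (f := fun k : ℤ => ‖u k‖ ^ (2 : ℝ≥0∞).toReal)).2 hs
  have hv : Summable fun k : ℤ => ‖v k‖ ^ (2 : ℝ≥0∞).toReal := (lp.memℓp v).summable hp
  calc ∑' k : ℤ, ‖v k‖ ^ (2 : ℝ≥0∞).toReal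
      ≤ ∑' k : ℤ, C ^ (2 : ℝ≥0∞).toReal * ‖u (σ k)‖ ^ (2 : ℝ≥0∞).toReal := by
        refine Summable.tsum_le_tsum (fun k => ?_) hv (hs2.mul_left _)
        calc ‖v k‖ ^ (2 : ℝ≥0∞).toReal ≤ (C * ‖u (σ k)‖) ^ (2 : ℝ≥0∞).toReal :=
              Real.rpow_le_rpow (norm_nonneg _) (h k) (by norm_num)
          _ = C ^ (2 : ℝ≥0∞).toReal * ‖u (σ k)‖ ^ (2 : ℝ≥0∞).toReal :=
              Real.mul_rpow hC (norm_nonneg _)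
    _ = C ^ (2 : ℝ≥0∞).toReal * ∑' k : ℤ, ‖u (σ k)‖ ^ (2 : ℝ≥0∞).toReal := tsum_mul_left
    _ = C ^ (2 : ℝ≥0∞).toReal * ∑' k : ℤ, ‖u k‖ ^ (2 : ℝ≥0∞).toReal := by
        rw [σ.tsum_eq (fun k : ℤ => ‖u k‖ ^ (2 : ℝ≥0∞).toReal)]
    _ = C ^ (2 : ℝ≥0∞).toReal * ‖u‖ ^ (2 : ℝ≥0∞).toReal := by
        rw [lp.norm_rpow_eq_tsum hp]
    _ = (C * ‖u‖) ^ (2 : ℝ≥0∞).toReal := (Real.mul_rpow hC (norm_nonneg _)).symm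

/-- Bounded multiplication operator on `ℓ²(ℤ)`. -/
def mulCLM (m : ℤ → ℂ) (C : ℝ) (hC : 0 ≤ C) (hm : ∀ k, ‖m k‖ ≤ C) : E →L[ℂ] E :=
  LinearMap.mkContinuous
    { toFun := fun u => ⟨fun k => m k * u k,
        memℓp_of_bound u _ (Equiv.refl ℤ) hC (fun k => by
          simpa [norm_mul] using mul_le_mul_of_nonneg_right (hm k) (norm_nonneg (u k)))⟩
      map_add' := fun u v => by
        apply lp.ext; funext k
        simp [mul_add]; rfl
      map_smul' := fun c u => by
        apply lp.ext; funext k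
        simp; ring }
    C (fun u => norm_le_of_bound u _ (Equiv.refl ℤ) hC (fun k => by
      simpa [norm_mul] using mul_le_mul_of_nonneg_right (hm k) (norm_nonneg (u k))))

instance : Nontrivial E := by
  refine ⟨lp.single (E := fun _ : ℤ => ℂ) 2 (0:ℤ) (1:ℂ), 0, fun h => ?_⟩
  have h0 : (lp.single (E := fun _ : ℤ => ℂ) 2 (0:ℤ) (1:ℂ)) 0 = ((0 : E) : ℤ → ℂ) 0 := by
    rw [h]
  rw [lp.single_apply_self] at h0
  simp at h0

lemma mulCLM_apply (m : ℤ → ℂ) (C : ℝ) (hC : 0 ≤ C) (hm : ∀ k, ‖m k‖ ≤ C) (u : E) (k : ℤ) :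
    mulCLM m C hC hm u k = m k * u k := rfl

end

end Stmt6Aux

set_option maxHeartbeats 1000000 in
set_option synthInstance.maxHeartbeats 400000 in
open Stmt6Aux in
/-- For a sequence `a : ℤ → ℂ` with `a k ≠ 0` and nonzero limits `a(±∞)`, if
`|λ| > max {|a(+∞)|, |a(−∞)|}` then the operator `aW − λI` on `ℓ²(ℤ)` is invertible,
i.e. `λ` is not in the spectrum of `aW`. -/
theorem stmt6 (a : ℤ → ℂ) (ha : ∀ k, a k ≠ 0)
    (aP aM : ℂ) (haP : aP ≠ 0) (haM : aM ≠ 0)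
    (hlimP : Tendsto a atTop (𝓝 aP)) (hlimM : Tendsto a atBot (𝓝 aM))
    (B : lp (fun _ : ℤ => ℂ) 2 →L[ℂ] lp (fun _ : ℤ => ℂ) 2)
    (hB : ∀ (u : lp (fun _ : ℤ => ℂ) 2) (k : ℤ), B u k = a k * u (k + 1))
    (lam : ℂ) (hlam : max ‖aP‖ ‖aM‖ < ‖lam‖) :
    lam ∉ spectrum ℂ B := by
  -- choose ρ strictly between the limits and ‖lam‖
  obtain ⟨ρ, hρ1, hρ2⟩ := exists_between hlam
  have hρpos : 0 < ρ := lt_of_le_of_lt (le_trans (norm_nonneg aP) (le_max_left _ _)) hρ1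
  -- find N beyond which ‖a k‖ < ρ
  have hP : ∀ᶠ k in atTop, ‖a k‖ < ρ :=
    hlimP.norm.eventually_lt_const ((le_max_left _ _).trans_lt hρ1)
  have hM : ∀ᶠ k in atBot, ‖a k‖ < ρ :=
    hlimM.norm.eventually_lt_const ((le_max_right _ _).trans_lt hρ1)
  obtain ⟨N1, hN1⟩ := eventually_atTop.1 hP
  obtain ⟨N2, hN2⟩ := eventually_atBot.1 hM
  set N : ℤ := max 0 (max N1 (-N2)) with hNdef
  have hbig : ∀ k : ℤ, N ≤ k ∨ k ≤ -N → ‖a k‖ < ρ := by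
    rintro k (hk | hk)
    · exact hN1 k (le_trans (le_trans (le_max_left _ _) (le_max_right _ _)) hk)
    · refine hN2 k (le_trans hk ?_)
      have : -N2 ≤ N := le_trans (le_max_right _ _) (le_max_right _ _)
      linarith
  -- the rescaling weights
  set c : ℤ → ℝ := fun k => min 1 (ρ / ‖a k‖) with hcdef
  have hcpos : ∀ k, 0 < c k := fun k => lt_min one_pos (div_pos hρpos (norm_pos_iff.2 (ha k)))
  have hcle : ∀ k, c k ≤ 1 := fun k => min_le_left _ _
  have hkey : ∀ k, ‖a k‖ * c k ≤ ρ := by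
    intro k
    calc ‖a k‖ * c k ≤ ‖a k‖ * (ρ / ‖a k‖) :=
          mul_le_mul_of_nonneg_left (min_le_right _ _) (norm_nonneg _)
      _ = ρ := mul_div_cancel₀ ρ (norm_ne_zero_iff.2 (ha k))
  have hc1 : ∀ k : ℤ, N ≤ k ∨ k ≤ -N → c k = 1 := by
    intro k hk
    exact min_eq_left ((one_le_div (norm_pos_iff.2 (ha k))).2 (hbig k hk).le)
  set d : ℤ → ℝ := fun k => ∏ i ∈ Finset.Ico (-N) k, c i with hddef
  have hdpos : ∀ k, 0 < d k := fun k => Finset.prod_pos (fun i _ => hcpos i)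
  have hdle1 : ∀ k, d k ≤ 1 := fun k =>
    Finset.prod_le_one (fun i _ => (hcpos i).le) (fun i _ => hcle i)
  have hstep : ∀ k, d (k + 1) = d k * c k := by
    intro k
    by_cases hk : -N ≤ k
    · have hsplit : Finset.Ico (-N) k ∪ Finset.Ico k (k + 1) = Finset.Ico (-N) (k + 1) :=
        Finset.Ico_union_Ico_eq_Ico hk (by linarith)
      have hsing : Finset.Ico k (k + 1) = {k} := by
        ext x; simp [Finset.mem_Ico]; omega
      calc d (k+1) = ∏ i ∈ Finset.Ico (-N) k ∪ Finset.Ico k (k+1), c i := by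
              rw [hddef]; rw [hsplit]
        _ = (∏ i ∈ Finset.Ico (-N) k, c i) * ∏ i ∈ Finset.Ico k (k+1), c i :=
              Finset.prod_union (Finset.Ico_disjoint_Ico_consecutive _ _ _)
        _ = d k * c k := by rw [hsing, Finset.prod_singleton]
    · push_neg at hk
      have h1 : ¬ (-N) < k + 1 := by linarith
      have h2 : ¬ (-N) < k := by linarith
      have hck : c k = 1 := hc1 k (Or.inr (by linarith))
      simp only [hddef, Finset.Ico_eq_empty h1, Finset.Ico_eq_empty h2,
        Finset.prod_empty, hck, one_mul]
  set δ : ℝ := d N with hδdef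
  have hδpos : 0 < δ := hdpos N
  have hNN : -N ≤ N := by
    have : (0:ℤ) ≤ N := le_max_left _ _
    linarith
  have hδle : ∀ k, δ ≤ d k := by
    intro k
    rcases le_or_gt k (-N) with hk | hk
    · have : d k = 1 := by
        simp only [hddef, Finset.Ico_eq_empty (not_lt.2 hk), Finset.prod_empty]
      rw [this]; exact hdle1 N
    rcases le_or_gt k N with hk2 | hk2
    · have hsplit : d k * ∏ i ∈ Finset.Ico k N, c i = δ := by
        simp only [hddef, hδdef,
          ← Finset.prod_union (Finset.Ico_disjoint_Ico_consecutive (-N) k N),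
          Finset.Ico_union_Ico_eq_Ico hk.le hk2]
      calc δ = d k * ∏ i ∈ Finset.Ico k N, c i := hsplit.symm
        _ ≤ d k * 1 := mul_le_mul_of_nonneg_left
              (Finset.prod_le_one (fun i _ => (hcpos i).le) (fun i _ => hcle i)) (hdpos k).le
        _ = d k := mul_one _
    · have hone : ∏ i ∈ Finset.Ico N k, c i = 1 :=
        Finset.prod_eq_one (fun i hi => hc1 i (Or.inl (Finset.mem_Ico.1 hi).1))
      have hsplit : δ * ∏ i ∈ Finset.Ico N k, c i = d k := by
        simp only [hddef, hδdef,
          ← Finset.prod_union (Finset.Ico_disjoint_Ico_consecutive (-N) N k),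
          Finset.Ico_union_Ico_eq_Ico hNN hk2.le]
      rw [← hsplit, hone, mul_one]
  have hdinv_le : ∀ k, (d k)⁻¹ ≤ δ⁻¹ := fun k =>
    inv_anti₀ hδpos (hδle k)
  -- the diagonal operators
  set D : E →L[ℂ] E := mulCLM (fun k => ((d k : ℝ) : ℂ)) 1 zero_le_one
    (fun k => by
      rw [Complex.norm_real, Real.norm_eq_abs, abs_of_pos (hdpos k)]; exact hdle1 k) with hDdef
  set Dinv : E →L[ℂ] E := mulCLM (fun k => (((d k)⁻¹ : ℝ) : ℂ)) δ⁻¹ (by positivity)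
    (fun k => by
      rw [Complex.norm_real, Real.norm_eq_abs, abs_of_pos (inv_pos.2 (hdpos k))]; exact hdinv_le k) with hDinvdef
  have hDDinv : D * Dinv = 1 := by
    refine ContinuousLinearMap.ext fun u => ?_
    apply lp.ext; funext k
    show ((d k : ℝ) : ℂ) * ((((d k)⁻¹ : ℝ) : ℂ) * u k) = u k
    push_cast
    rw [← mul_assoc, mul_inv_cancel₀ (by exact_mod_cast (hdpos k).ne'), one_mul]
  have hDinvD : Dinv * D = 1 := by
    refine ContinuousLinearMap.ext fun u => ?_
    apply lp.ext; funext k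
    show (((d k)⁻¹ : ℝ) : ℂ) * (((d k : ℝ) : ℂ) * u k) = u k
    push_cast
    rw [← mul_assoc, inv_mul_cancel₀ (by exact_mod_cast (hdpos k).ne'), one_mul]
  set B' : E →L[ℂ] E := Dinv * B * D with hB'def
  have hB'norm : ‖B'‖ ≤ ρ := by
    refine ContinuousLinearMap.opNorm_le_bound _ hρpos.le (fun u => ?_)
    refine norm_le_of_bound u _ (Equiv.addRight (1:ℤ)) hρpos.le (fun k => ?_)
    have hBu : B' u = Dinv (B (D u)) := by
      rw [hB'def, ContinuousLinearMap.mul_apply, ContinuousLinearMap.mul_apply]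
    have h1 : B' u k = (((d k)⁻¹ : ℝ) : ℂ) * (a k * (((d (k+1) : ℝ) : ℂ) * u (k+1))) := by
      rw [hBu, hDinvdef, mulCLM_apply, hB, hDdef, mulCLM_apply]
    rw [h1]
    have h2 : ‖(((d k)⁻¹ : ℝ) : ℂ) * (a k * (((d (k+1) : ℝ) : ℂ) * u (k+1)))‖
        = (d k)⁻¹ * (‖a k‖ * (d (k+1) * ‖u (k+1)‖)) := by
      rw [norm_mul, norm_mul, norm_mul, Complex.norm_real, Complex.norm_real,
        Real.norm_eq_abs, Real.norm_eq_abs,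
        abs_of_pos (inv_pos.2 (hdpos k)), abs_of_pos (hdpos (k+1))]
    rw [h2]
    have h3 : (d k)⁻¹ * (‖a k‖ * (d (k+1) * ‖u (k+1)‖)) = (‖a k‖ * c k) * ‖u (k+1)‖ := by
      rw [hstep k]
      field_simp [(hdpos k).ne']
    rw [h3]
    have h4 : u ((Equiv.addRight (1:ℤ)) k) = u (k+1) := rfl
    rw [h4]
    exact mul_le_mul_of_nonneg_right (hkey k) (norm_nonneg _)
  have hspec : lam ∉ spectrum ℂ B' := by
    intro hmem
    have := spectrum.norm_le_norm_of_mem hmem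
    linarith
  rw [spectrum.notMem_iff] at hspec ⊢
  have hDunit : IsUnit D := ⟨⟨D, Dinv, hDDinv, hDinvD⟩, rfl⟩
  have hDinvunit : IsUnit Dinv := ⟨⟨Dinv, D, hDinvD, hDDinv⟩, rfl⟩
  have hconj : algebraMap ℂ (E →L[ℂ] E) lam - B
      = D * (algebraMap ℂ (E →L[ℂ] E) lam - B') * Dinv := by
    have e1 : D * B' * Dinv = B := by
      have : D * (Dinv * B * D) * Dinv = (D * Dinv) * B * (D * Dinv) := by
        noncomm_ring
      rw [hB'def, this, hDDinv, one_mul, mul_one]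
    have e2 : D * algebraMap ℂ (E →L[ℂ] E) lam * Dinv = algebraMap ℂ (E →L[ℂ] E) lam := by
      rw [← Algebra.commutes lam D, mul_assoc, hDDinv, mul_one]
    rw [mul_sub, sub_mul, e1, e2]
  rw [hconj]
  exact (hDunit.mul hspec).mul hDinvunit
end

section
/- Let α: X₀ → X₀ be a bijection and W ⊆ X₀ with α(W) ⊆ W, and suppose for every x ∈ X₀ there exist integers m with α^m(x) ∈ W and integers m with α^m(x) ∉ W. Then every orbit {α^n(x) : n ∈ ℤ} meets the set Θ = W \ α(W) in exactly one point. -/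
open Set

/-- If `α` is a bijection, `W` satisfies `α(W) ⊆ W`, and every orbit meets both `W`
and its complement, then every orbit meets the fundamental set `Θ = W \ α(W)` in
exactly one point. -/
theorem stmt13 {X : Type*} (α : Equiv.Perm X) (W : Set X) (hWinv : ⇑α '' W ⊆ W)
    (hin : ∀ x : X, ∃ m : ℤ, (α ^ m) x ∈ W)
    (hout : ∀ x : X, ∃ m : ℤ, (α ^ m) x ∉ W) :
    ∀ x : X, ∃! n : ℤ, (α ^ n) x ∈ W \ ⇑α '' W := by
  intro x
  classical
  set P : ℤ → Prop := fun n => (α ^ n) x ∈ W with hP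
  have hshift : ∀ n : ℤ, (α ^ (n + 1)) x = α ((α ^ n) x) := by
    intro n
    have : α ^ (n + 1) = α * α ^ n := by rw [add_comm, zpow_add, zpow_one]
    rw [this, Equiv.Perm.mul_apply]
  have hstep : ∀ n : ℤ, P n → P (n + 1) := by
    intro n hn
    have : (α ^ (n + 1)) x ∈ ⇑α '' W := by
      rw [hshift n]; exact ⟨_, hn, rfl⟩
    exact hWinv this
  have hmono : ∀ n m : ℤ, P n → n ≤ m → P m := by
    intro n m hn hle
    obtain ⟨k, hk⟩ : ∃ k : ℕ, m = n + k := ⟨(m - n).toNat, by omega⟩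
    subst hk
    clear hle
    induction k with
    | zero => simpa using hn
    | succ k ih =>
      have heq : (n + ↑(k + 1) : ℤ) = n + ↑k + 1 := by push_cast; ring
      rw [heq]
      exact hstep _ ih
  obtain ⟨m₀, hm₀⟩ := hin x
  obtain ⟨m₁, hm₁⟩ := hout x
  have hbdd : ∃ b : ℤ, ∀ z : ℤ, P z → b ≤ z := by
    refine ⟨m₁ + 1, fun z hz => ?_⟩
    by_contra h
    exact hm₁ (hmono z m₁ hz (by omega))
  obtain ⟨n₀, hn₀, hleast⟩ := Int.exists_least_of_bdd hbdd ⟨m₀, hm₀⟩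
  have hkey : ∀ n : ℤ, (α ^ n) x ∈ ⇑α '' W ↔ P (n - 1) := by
    intro n
    constructor
    · rintro ⟨w, hw, hww⟩
      have : (α ^ n) x = α ((α ^ (n - 1)) x) := by
        rw [← hshift (n - 1)]; norm_num
      have hinj : (α ^ (n - 1)) x = w := α.injective (by rw [← this, hww])
      show (α ^ (n - 1)) x ∈ W
      rw [hinj]; exact hw
    · intro h
      have : (α ^ n) x = α ((α ^ (n - 1)) x) := by
        rw [← hshift (n - 1)]; norm_num
      exact ⟨_, h, this.symm⟩
  refine ⟨n₀, ⟨hn₀, ?_⟩, ?_⟩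
  · intro h
    have := (hkey n₀).1 h
    have := hleast _ this
    omega
  · rintro n ⟨hnW, hnim⟩
    have h1 : n₀ ≤ n := hleast _ hnW
    by_contra hne
    have : P (n - 1) := hmono n₀ (n - 1) hn₀ (by omega)
    exact hnim ((hkey n).2 this)
end

section
/- Let a: ℤ → ℂ be a bounded sequence with a(k) ≠ 0 for all k and limits a(±∞) at ±∞, and suppose |λ| = |a(+∞)| ≠ 0 with |a(−∞)| < |λ|. Then the range of aW − λI on l²(ℤ) is not closed. -/
open Filter Topology
noncomputable section

private lemma stmt19_inner_eq_sum (x y : lp (fun _ : ℤ => ℂ) 2) (s : Finset ℤ)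
    (hy : ∀ k ∉ s, y k = 0) :
    inner ℂ x y = ∑ k ∈ s, (starRingEnd ℂ) (x k) * y k := by
  rw [lp.inner_eq_tsum]
  rw [tsum_eq_sum (s := s) (f := fun k => inner ℂ (x k) (y k)) ?_]
  · exact Finset.sum_congr rfl fun k _ => (RCLike.inner_apply _ _).trans (mul_comm _ _)
  · intro k hk
    show inner ℂ (x k) (y k) = 0
    rw [hy k hk]; exact inner_zero_right _

private lemma stmt19_inner_eq_sum_left (x y : lp (fun _ : ℤ => ℂ) 2) (s : Finset ℤ)
    (hx : ∀ k ∉ s, x k = 0) :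
    inner ℂ x y = ∑ k ∈ s, (starRingEnd ℂ) (x k) * y k := by
  rw [lp.inner_eq_tsum]
  rw [tsum_eq_sum (s := s) (f := fun k => inner ℂ (x k) (y k)) ?_]
  · exact Finset.sum_congr rfl fun k _ => (RCLike.inner_apply _ _).trans (mul_comm _ _)
  · intro k hk
    show inner ℂ (x k) (y k) = 0
    rw [hx k hk]; exact inner_zero_left _

private lemma stmt19_Tcoord (a : ℤ → ℂ) (lam : ℂ) (B : lp (fun _ : ℤ => ℂ) 2 →L[ℂ] lp (fun _ : ℤ => ℂ) 2)
    (hB : ∀ u k, B u k = a k * u (k + 1)) (u : lp (fun _ : ℤ => ℂ) 2) (k : ℤ) :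
    ((B - lam • ContinuousLinearMap.id ℂ (lp (fun _ : ℤ => ℂ) 2)) u) k
      = a k * u (k+1) - lam * u k := by
  rw [ContinuousLinearMap.sub_apply, lp.coeFn_sub, Pi.sub_apply, hB,
    ContinuousLinearMap.smul_apply, ContinuousLinearMap.id_apply, lp.coeFn_smul, Pi.smul_apply,
    smul_eq_mul]

private lemma stmt19_surj (a : ℤ → ℂ) (lam : ℂ) (hlam0 : lam ≠ 0)
    (B : lp (fun _ : ℤ => ℂ) 2 →L[ℂ] lp (fun _ : ℤ => ℂ) 2)
    (hB : ∀ u k, B u k = a k * u (k + 1))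
    (q : ℝ) (hq0 : 0 ≤ q) (hq1 : q < 1) (K0 : ℤ)
    (hK0 : ∀ m : ℤ, m ≤ K0 → ‖a m‖ ≤ q * ‖lam‖)
    (hcl : IsClosed (Set.range ⇑(B - lam • ContinuousLinearMap.id ℂ (lp (fun _ : ℤ => ℂ) 2)))) :
    Function.Surjective ⇑(B - lam • ContinuousLinearMap.id ℂ (lp (fun _ : ℤ => ℂ) 2)) := by
  set T := B - lam • ContinuousLinearMap.id ℂ (lp (fun _ : ℤ => ℂ) 2) with hT
  set K : Submodule ℂ (lp (fun _ : ℤ => ℂ) 2) := LinearMap.range (T : lp (fun _ : ℤ => ℂ) 2 →ₗ[ℂ] lp (fun _ : ℤ => ℂ) 2) with hKdef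
  have hKset : (K : Set (lp (fun _ : ℤ => ℂ) 2)) = Set.range ⇑T := LinearMap.coe_range _
  have hKclosed : IsClosed (K : Set (lp (fun _ : ℤ => ℂ) 2)) := by rw [hKset]; exact hcl
  haveI : CompleteSpace K := hKclosed.completeSpace_coe
  refine (LinearMap.range_eq_top (f := (T : lp (fun _ : ℤ => ℂ) 2 →ₗ[ℂ] lp (fun _ : ℤ => ℂ) 2))).mp ?_
  by_contra hne
  have hbot : Kᗮ ≠ ⊥ := fun h => hne (Submodule.orthogonal_eq_bot_iff.mp h)
  obtain ⟨v, hvK, hv0⟩ := Submodule.ne_bot_iff _ |>.mp hbot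
  have hlampos : (0:ℝ) < ‖lam‖ := norm_pos_iff.mpr hlam0
  have hlamc : (starRingEnd ℂ) lam ≠ 0 := by simpa using hlam0
  -- the recursion satisfied by v
  have hrec : ∀ m : ℤ,
      (starRingEnd ℂ) lam * v m = (starRingEnd ℂ) (a (m-1)) * v (m-1) := by
    intro m
    have hmem : T (lp.single 2 m 1) ∈ K := LinearMap.mem_range_self _ _
    have hm : inner ℂ (T (lp.single 2 m 1)) v = 0 :=
      (Submodule.mem_orthogonal K v).mp hvK _ hmem
    rw [stmt19_inner_eq_sum_left _ _ ({m-1, m} : Finset ℤ) ?_] at hm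
    · rw [Finset.sum_pair (by omega : m - 1 ≠ m)] at hm
      rw [stmt19_Tcoord a lam B hB, stmt19_Tcoord a lam B hB] at hm
      rw [show m - 1 + 1 = m by ring] at hm
      rw [lp.single_apply_self, lp.single_apply_ne 2 m _ (by omega : m - 1 ≠ m),
        lp.single_apply_ne 2 m _ (by omega : m + 1 ≠ m)] at hm
      simp only [mul_one, mul_zero, sub_zero, zero_sub, map_neg] at hm
      linear_combination -hm
    · intro k hk
      simp only [Finset.mem_insert, Finset.mem_singleton, not_or] at hk
      rw [stmt19_Tcoord a lam B hB,
        lp.single_apply_ne 2 m _ (by omega : k + 1 ≠ m),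
        lp.single_apply_ne 2 m _ (by omega : k ≠ m)]
      simp
  have hnorm : ∀ m : ℤ, ‖lam‖ * ‖v m‖ = ‖a (m-1)‖ * ‖v (m-1)‖ := by
    intro m
    have := congrArg norm (hrec m)
    simpa [norm_mul, RCLike.norm_conj] using this
  have hstep : ∀ j : ℤ, j ≤ K0 + 1 → ‖v j‖ ≤ q * ‖v (j-1)‖ := by
    intro j hj
    have h1 : ‖a (j-1)‖ ≤ q * ‖lam‖ := hK0 _ (by omega)
    have h2 : ‖lam‖ * ‖v j‖ ≤ ‖lam‖ * (q * ‖v (j-1)‖) := by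
      rw [hnorm j]
      nlinarith [norm_nonneg (v (j-1))]
    exact le_of_mul_le_mul_left h2 hlampos
  have hiter : ∀ n : ℕ, ∀ m : ℤ, m ≤ K0 + 1 → ‖v m‖ ≤ q ^ n * ‖v (m - n)‖ := by
    intro n
    induction n with
    | zero => intro m _; simp
    | succ n ih =>
      intro m hm
      have h1 : ‖v m‖ ≤ q * ‖v (m-1)‖ := hstep m hm
      have h2 : ‖v (m-1)‖ ≤ q ^ n * ‖v (m - 1 - n)‖ := ih (m-1) (by omega)
      have h3 : m - 1 - (n:ℤ) = m - ((n:ℕ)+1 : ℕ) := by push_cast; ring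
      calc ‖v m‖ ≤ q * ‖v (m-1)‖ := h1
        _ ≤ q * (q ^ n * ‖v (m - 1 - n)‖) :=
          mul_le_mul_of_nonneg_left h2 hq0
        _ = q ^ (n+1) * ‖v (m - ((n:ℕ)+1 : ℕ))‖ := by rw [h3]; ring
  have hzero_le : ∀ m : ℤ, m ≤ K0 + 1 → v m = 0 := by
    intro m hm
    have hle : ∀ n : ℕ, ‖v m‖ ≤ q ^ n * ‖v‖ := by
      intro n
      refine (hiter n m hm).trans ?_
      exact mul_le_mul_of_nonneg_left (lp.norm_apply_le_norm (by norm_num) v _)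
        (pow_nonneg hq0 n)
    have htend : Tendsto (fun n : ℕ => q ^ n * ‖v‖) atTop (𝓝 0) := by
      simpa using (tendsto_pow_atTop_nhds_zero_of_lt_one hq0 hq1).mul_const ‖v‖
    have : ‖v m‖ ≤ 0 := ge_of_tendsto' htend hle
    simpa using le_antisymm this (norm_nonneg _)
  have hup : ∀ n : ℕ, v (K0 + 1 + n) = 0 := by
    intro n
    induction n with
    | zero => simpa using hzero_le (K0+1) le_rfl
    | succ n ih =>
      have h1 := hrec (K0 + 1 + (n+1 : ℕ))
      have h2 : K0 + 1 + ((n:ℕ)+1 : ℕ) - 1 = K0 + 1 + (n:ℕ) := by push_cast; ring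
      rw [h2, ih, mul_zero] at h1
      exact (mul_eq_zero.mp h1).resolve_left hlamc
  have hall : ∀ m : ℤ, v m = 0 := by
    intro m
    by_cases hm : m ≤ K0 + 1
    · exact hzero_le m hm
    · have h1 : K0 + 1 + ((m - (K0+1)).toNat : ℤ) = m := by omega
      have := hup (m - (K0+1)).toNat
      rwa [h1] at this
  exact hv0 (lp.ext (funext fun m => by rw [hall m]; rfl))

set_option maxHeartbeats 1000000 in
/-- For a bounded sequence `a : ℤ → ℂ` with `a k ≠ 0` and limits `a(±∞)`, if
`|λ| = |a(+∞)| ≠ 0` and `|a(−∞)| < |λ|`, then the range of `aW − λI` on `ℓ²(ℤ)` is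
not closed. -/
theorem stmt19 (a : ℤ → ℂ) (ha : ∀ k, a k ≠ 0)
    (aP aM : ℂ) (haP : aP ≠ 0) (haM : aM ≠ 0)
    (hlimP : Tendsto a atTop (𝓝 aP)) (hlimM : Tendsto a atBot (𝓝 aM))
    (B : lp (fun _ : ℤ => ℂ) 2 →L[ℂ] lp (fun _ : ℤ => ℂ) 2)
    (hB : ∀ (u : lp (fun _ : ℤ => ℂ) 2) (k : ℤ), B u k = a k * u (k + 1))
    (lam : ℂ) (hlam1 : ‖lam‖ = ‖aP‖) (hlam2 : ‖aM‖ < ‖lam‖) :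
    ¬ IsClosed (Set.range ⇑(B - lam • ContinuousLinearMap.id ℂ (lp (fun _ : ℤ => ℂ) 2))) := by
  intro hcl
  have hlampos : (0:ℝ) < ‖lam‖ := by rw [hlam1]; exact norm_pos_iff.mpr haP
  have hlam0 : lam ≠ 0 := norm_pos_iff.mp hlampos
  have hlamc : (starRingEnd ℂ) lam ≠ 0 := by simpa using hlam0
  -- surjectivity via Part A
  set q : ℝ := (‖aM‖ / ‖lam‖ + 1) / 2 with hqdef
  have hq0 : 0 ≤ q := by positivity
  have hdiv : ‖aM‖ / ‖lam‖ < 1 := (div_lt_one hlampos).mpr hlam2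
  have hq1 : q < 1 := by rw [hqdef]; linarith
  have hqlam : ‖aM‖ < q * ‖lam‖ := by
    have hcancel : ‖aM‖ / ‖lam‖ * ‖lam‖ = ‖aM‖ := div_mul_cancel₀ _ hlampos.ne'
    rw [hqdef]
    nlinarith [hcancel, hlam2]
  obtain ⟨K0, hK0⟩ : ∃ K0 : ℤ, ∀ m ≤ K0, ‖a m‖ ≤ q * ‖lam‖ := by
    have h1 : ∀ᶠ m in atBot, ‖a m‖ < q * ‖lam‖ :=
      (hlimM.norm).eventually_lt_const hqlam
    obtain ⟨K0, hK0⟩ := eventually_atBot.mp h1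
    exact ⟨K0, fun m hm => (hK0 m hm).le⟩
  have hsurj := stmt19_surj a lam hlam0 B hB q hq0 hq1 K0 hK0 hcl
  obtain ⟨C, hC0, hC⟩ := ContinuousLinearMap.exists_preimage_norm_le _ hsurj
  -- choose window length L and precision δ
  set L : ℕ := ⌈(68:ℝ) * C^2 * ‖lam‖^2⌉₊ + 1 with hLdef
  have hL : 68 * C^2 * ‖lam‖^2 < (L:ℝ) + 1 := by
    have h := Nat.le_ceil ((68:ℝ) * C^2 * ‖lam‖^2)
    have : ((⌈(68:ℝ) * C^2 * ‖lam‖^2⌉₊ : ℕ) : ℝ) ≤ (L:ℝ) := by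
      rw [hLdef]; push_cast; linarith
    linarith
  set δ : ℝ := 1 / (2 * ((L:ℝ) + 1)) with hδdef
  have hδ0 : 0 < δ := by positivity
  have hδL : ((L:ℝ) + 1) * δ = 1/2 := by rw [hδdef]; field_simp
  have hδhalf : δ ≤ 1/2 := by
    rw [hδdef]
    rw [div_le_div_iff₀ (by positivity) (by norm_num)]
    have : (0:ℝ) ≤ (L:ℝ) := Nat.cast_nonneg L
    linarith
  -- choose the window start N
  have h2 : Tendsto (fun i => ‖a i‖) atTop (𝓝 ‖lam‖) := by rw [hlam1]; exact hlimP.norm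
  have h3 : ∀ᶠ i in atTop, ‖a i‖ < (1+δ)*‖lam‖ :=
    h2.eventually_lt_const (by nlinarith)
  have h4 : ∀ᶠ i in atTop, (1-δ)*‖lam‖ < ‖a i‖ :=
    h2.eventually_const_lt (by nlinarith)
  obtain ⟨N, hN⟩ := eventually_atTop.mp (h3.and h4)
  -- the approximate-eigen sequence p
  set p : ℕ → ℂ := fun n => Nat.rec (motive := fun _ => ℂ) 1
      (fun n pn => ((starRingEnd ℂ) (a (N + n)) / (starRingEnd ℂ) lam) * pn) n with hpdef
  have hp0 : p 0 = 1 := rfl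
  have hpS : ∀ n : ℕ, p (n+1) = ((starRingEnd ℂ) (a (N + n)) / (starRingEnd ℂ) lam) * p n :=
    fun n => rfl
  have hpnormS : ∀ n : ℕ, ‖p (n+1)‖ = (‖a (N+n)‖ / ‖lam‖) * ‖p n‖ := by
    intro n; rw [hpS, norm_mul, norm_div, RCLike.norm_conj, RCLike.norm_conj]
  have hratio : ∀ n : ℕ, (1-δ) ≤ ‖a (N+n)‖ / ‖lam‖ ∧ ‖a (N+n)‖ / ‖lam‖ ≤ (1+δ) := by
    intro n
    have hNn : N ≤ N + (n:ℤ) := by omega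
    obtain ⟨hu, hl⟩ := hN (N + n) hNn
    constructor
    · rw [le_div_iff₀ hlampos]; linarith
    · rw [div_le_iff₀ hlampos]; linarith
  have hpbound : ∀ n : ℕ, n ≤ L → 1 - n*δ ≤ ‖p n‖ ∧ ‖p n‖ ≤ 1/(1 - n*δ) := by
    intro n
    induction n with
    | zero => intro _; simp [hp0]
    | succ n ih =>
      intro hn
      obtain ⟨ih1, ih2⟩ := ih (by omega)
      have hcast : ((n:ℝ)+1) ≤ (L:ℝ) := by exact_mod_cast hn
      have hb2 : 0 < 1 - ((n:ℝ)+1)*δ := by nlinarith [hδL, (Nat.cast_nonneg L : (0:ℝ) ≤ (L:ℝ))]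
      have hb1 : 0 < 1 - (n:ℝ)*δ := by nlinarith
      obtain ⟨hr1, hr2⟩ := hratio n
      have hnrm := hpnormS n
      have hpn0 : (0:ℝ) ≤ ‖p n‖ := norm_nonneg _
      constructor
      · have hlow : (1-δ) * (1 - (n:ℝ)*δ) ≤ ‖p (n+1)‖ := by
          rw [hnrm]
          have := mul_le_mul hr1 ih1 (by linarith) (by linarith)
          linarith [this]
        have : 1 - ((n:ℝ)+1)*δ ≤ (1-δ)*(1-(n:ℝ)*δ) := by nlinarith [hδ0.le, (Nat.cast_nonneg n : (0:ℝ) ≤ (n:ℝ))]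
        push_cast
        linarith
      · have hcast2 : ((n+1 : ℕ):ℝ) = (n:ℝ)+1 := by push_cast; ring
        rw [hcast2, le_div_iff₀ hb2]
        have ih2' : ‖p n‖ * (1 - (n:ℝ)*δ) ≤ 1 := (le_div_iff₀ hb1).mp ih2
        have hup : ‖p (n+1)‖ ≤ (1+δ) * ‖p n‖ := by
          rw [hnrm]
          exact mul_le_mul_of_nonneg_right hr2 hpn0
        have hkey : (1+δ) * (1 - ((n:ℝ)+1)*δ) ≤ 1 - (n:ℝ)*δ := by
          nlinarith [hδ0.le, (Nat.cast_nonneg n : (0:ℝ) ≤ (n:ℝ))]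
        calc ‖p (n+1)‖ * (1 - ((n:ℝ)+1)*δ) ≤ (1+δ) * ‖p n‖ * (1 - ((n:ℝ)+1)*δ) := by
              apply mul_le_mul_of_nonneg_right hup hb2.le
          _ = ‖p n‖ * ((1+δ) * (1 - ((n:ℝ)+1)*δ)) := by ring
          _ ≤ ‖p n‖ * (1 - (n:ℝ)*δ) := mul_le_mul_of_nonneg_left hkey hpn0
          _ ≤ 1 := ih2'
  have hnhalf : ∀ n : ℕ, n ≤ L → (1:ℝ)/2 ≤ 1 - n*δ := by
    intro n hn
    have hcast : ((n:ℝ)) ≤ (L:ℝ) := by exact_mod_cast hn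
    nlinarith [hδ0.le]
  have hpl : ∀ n : ℕ, n ≤ L → (1:ℝ)/2 ≤ ‖p n‖ :=
    fun n hn => le_trans (hnhalf n hn) (hpbound n hn).1
  have hpu : ∀ n : ℕ, n ≤ L → ‖p n‖ ≤ 2 := by
    intro n hn
    refine (hpbound n hn).2.trans ?_
    rw [div_le_iff₀ (by linarith [hnhalf n hn])]
    linarith [hnhalf n hn]
  -- the vector v / V
  set v : ℤ → ℂ := fun j => if h : N ≤ j ∧ j ≤ N + L then p (j - N).toNat else 0 with hvdef
  have hv_out : ∀ j : ℤ, (j < N ∨ N + L < j) → v j = 0 := by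
    intro j hj; exact dif_neg (by omega)
  have hvc : ∀ n : ℕ, n ≤ L → v (N + n) = p n := by
    intro n hn
    have h1 : N ≤ N + (n:ℤ) ∧ N + (n:ℤ) ≤ N + (L:ℤ) := by omega
    have h2 : ((N + (n:ℤ)) - N).toNat = n := by omega
    calc v (N + (n:ℤ)) = p ((N + (n:ℤ)) - N).toNat := dif_pos h1
      _ = p n := by rw [h2]
  have hvmem : Memℓp v 2 := by
    apply memℓp_gen
    refine summable_of_ne_finset_zero (s := Finset.Icc N (N + (L:ℤ))) ?_
    intro j hj
    rw [Finset.mem_Icc] at hj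
    have : v j = 0 := hv_out j (by omega)
    rw [this]
    norm_num
  set V : lp (fun _ : ℤ => ℂ) 2 := ⟨v, hvmem⟩ with hVdef
  have hVco : ∀ j, V j = v j := fun j => rfl
  -- the test function w
  set w : ℤ → ℂ := fun j =>
    (starRingEnd ℂ) (a (j-1)) * v (j-1) - (starRingEnd ℂ) lam * v j with hwdef
  have hwmid : ∀ j : ℤ, N + 1 ≤ j → j ≤ N + L → w j = 0 := by
    intro j h1 h2
    obtain ⟨n, rfl⟩ : ∃ n : ℕ, j = N + 1 + n := ⟨(j - (N+1)).toNat, by omega⟩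
    have e1 : N + 1 + (n:ℤ) - 1 = N + (n:ℤ) := by ring
    have e2 : v (N + (n:ℤ)) = p n := hvc n (by omega)
    have e3 : N + 1 + (n:ℤ) = N + ((n+1 : ℕ):ℤ) := by push_cast; ring
    have e4 : v (N + ((n+1:ℕ):ℤ)) = p (n+1) := hvc (n+1) (by omega)
    show (starRingEnd ℂ) (a (N+1+(n:ℤ)-1)) * v (N+1+(n:ℤ)-1)
      - (starRingEnd ℂ) lam * v (N+1+(n:ℤ)) = 0
    rw [e1, e2, e3, e4, hpS n]
    field_simp
    ring
  have hwN : w N = - (starRingEnd ℂ) lam := by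
    have e0 : v N = 1 := by
      have := hvc 0 (by omega)
      simpa [hp0] using this
    show (starRingEnd ℂ) (a (N-1)) * v (N-1) - (starRingEnd ℂ) lam * v N = _
    rw [hv_out (N-1) (by omega), e0]
    ring
  have hwE : w (N + L + 1) = (starRingEnd ℂ) (a (N+L)) * p L := by
    have e1 : v (N+(L:ℤ)) = p L := hvc L le_rfl
    show (starRingEnd ℂ) (a (N+(L:ℤ)+1-1)) * v (N+(L:ℤ)+1-1)
      - (starRingEnd ℂ) lam * v (N+(L:ℤ)+1) = _
    rw [show N+(L:ℤ)+1-1 = N+(L:ℤ) by ring, e1, hv_out (N+(L:ℤ)+1) (by omega)]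
    ring
  -- preimage of V
  obtain ⟨x, hxV, hxn⟩ := hC V
  -- the key identity
  have hsupp : ∀ k ∉ Finset.Icc N (N + (L:ℤ)), V k = 0 := by
    intro k hk
    rw [Finset.mem_Icc] at hk
    rw [hVco]
    exact hv_out k (by omega)
  have key : inner ℂ ((B - lam • ContinuousLinearMap.id ℂ (lp (fun _ : ℤ => ℂ) 2)) x) V
      = ∑ j ∈ Finset.Icc N (N + (L:ℤ) + 1), (starRingEnd ℂ) (x j) * w j := by
    rw [stmt19_inner_eq_sum _ V _ hsupp]
    have e1 : ∀ k ∈ Finset.Icc N (N + (L:ℤ)),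
        (starRingEnd ℂ) (((B - lam • ContinuousLinearMap.id ℂ (lp (fun _ : ℤ => ℂ) 2)) x) k) * V k
        = (starRingEnd ℂ) (a k) * (starRingEnd ℂ) (x (k+1)) * v k
          - (starRingEnd ℂ) lam * (starRingEnd ℂ) (x k) * v k := by
      intro k _
      rw [hVco, stmt19_Tcoord a lam B hB, map_sub, map_mul, map_mul]
      ring
    have e2 : ∀ j ∈ Finset.Icc N (N + (L:ℤ) + 1),
        (starRingEnd ℂ) (x j) * w j
        = (starRingEnd ℂ) (a (j-1)) * (starRingEnd ℂ) (x j) * v (j-1)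
          - (starRingEnd ℂ) lam * (starRingEnd ℂ) (x j) * v j := by
      intro j _
      show (starRingEnd ℂ) (x j) * ((starRingEnd ℂ) (a (j-1)) * v (j-1)
        - (starRingEnd ℂ) lam * v j) = _
      ring
    rw [Finset.sum_congr rfl e1, Finset.sum_congr rfl e2,
      Finset.sum_sub_distrib, Finset.sum_sub_distrib]
    congr 1
    · -- shift reindexing
      have hsub : Finset.Icc (N+1) (N+(L:ℤ)+1) ⊆ Finset.Icc N (N+(L:ℤ)+1) :=
        Finset.Icc_subset_Icc_left (by omega)
      rw [← Finset.sum_subset hsub ?_]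
      · rw [show Finset.Icc (N+1) (N+(L:ℤ)+1) = (Finset.Icc N (N+(L:ℤ))).map
            (addRightEmbedding 1) from (Finset.map_add_right_Icc _ _ _).symm,
          Finset.sum_map]
        apply Finset.sum_congr rfl
        intro k _
        simp only [addRightEmbedding_apply]
        rw [show k + 1 - 1 = k by ring]
      · intro j hj hj2
        have hjN : j = N := by
          rw [Finset.mem_Icc] at hj hj2
          omega
        rw [hjN]
        rw [hv_out (N-1) (by omega)]
        ring
    · apply Finset.sum_subset (Finset.Icc_subset_Icc_right (by omega : N + (L:ℤ) ≤ N + (L:ℤ) + 1))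
      intro j hj hj2
      have hjE : j = N + L + 1 := by
        rw [Finset.mem_Icc] at hj hj2
        omega
      subst hjE
      rw [hv_out (N+(L:ℤ)+1) (by omega)]
      ring
  -- norm estimates
  have hsum_v : ((L:ℝ)+1) * (1/4) ≤ ∑ j ∈ Finset.Icc N (N+(L:ℤ)), ‖V j‖^2 := by
    have hcard : (Finset.Icc N (N+(L:ℤ))).card = L + 1 := by
      rw [Int.card_Icc]; omega
    calc ((L:ℝ)+1) * (1/4) = ∑ _j ∈ Finset.Icc N (N+(L:ℤ)), (1/4:ℝ) := by
          rw [Finset.sum_const, hcard]; push_cast; ring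
      _ ≤ ∑ j ∈ Finset.Icc N (N+(L:ℤ)), ‖V j‖^2 := by
          apply Finset.sum_le_sum
          intro j hj
          rw [Finset.mem_Icc] at hj
          obtain ⟨n, rfl⟩ : ∃ n : ℕ, j = N + n := ⟨(j - N).toNat, by omega⟩
          have hn : n ≤ L := by omega
          rw [hVco, hvc n hn]
          nlinarith [hpl n hn, norm_nonneg (p n)]
  have hrpow : ∀ (y : lp (fun _ : ℤ => ℂ) 2) (s : Finset ℤ),
      ∑ j ∈ s, ‖y j‖^2 ≤ ‖y‖^2 := by
    intro y s
    have h := lp.sum_rpow_le_norm_rpow (p := 2) (by norm_num) y s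
    have e : ((2:ENNReal).toReal) = ((2:ℕ):ℝ) := by norm_num
    rw [e] at h
    simpa [Real.rpow_natCast] using h
  have hnormV : ((L:ℝ)+1) * (1/4) ≤ ‖V‖^2 := hsum_v.trans (hrpow V _)
  have hsum_w : ∑ j ∈ Finset.Icc N (N+(L:ℤ)+1), ‖w j‖^2 ≤ 17 * ‖lam‖^2 := by
    have hsub : ({N, N+(L:ℤ)+1} : Finset ℤ) ⊆ Finset.Icc N (N+(L:ℤ)+1) := by
      intro j hj
      simp only [Finset.mem_insert, Finset.mem_singleton] at hj
      rw [Finset.mem_Icc]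
      omega
    rw [← Finset.sum_subset hsub ?_]
    · rw [Finset.sum_pair (by omega : N ≠ N+(L:ℤ)+1), hwN, hwE]
      have h1 : ‖-(starRingEnd ℂ) lam‖ = ‖lam‖ := by
        rw [norm_neg, RCLike.norm_conj]
      have ha1 : ‖a (N+(L:ℤ))‖ ≤ 2*‖lam‖ := by
        have := (hN (N+(L:ℤ)) (by omega)).1
        nlinarith [hδhalf, hlampos]
      have h2 : ‖(starRingEnd ℂ) (a (N+(L:ℤ))) * p L‖ ≤ (2*‖lam‖) * 2 := by
        rw [norm_mul, RCLike.norm_conj]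
        exact mul_le_mul ha1 (hpu L le_rfl) (norm_nonneg _) (by positivity)
      rw [h1]
      nlinarith [norm_nonneg ((starRingEnd ℂ) (a (N+(L:ℤ))) * p L), hlampos]
    · intro j hj hj2
      rw [Finset.mem_Icc] at hj
      simp only [Finset.mem_insert, Finset.mem_singleton, not_or] at hj2
      rw [hwmid j (by omega) (by omega)]
      simp
  -- final contradiction
  have h5 : ‖V‖^2 ≤ ∑ j ∈ Finset.Icc N (N+(L:ℤ)+1), ‖x j‖ * ‖w j‖ := by
    calc ‖V‖^2
        = RCLike.re (inner ℂ ((B - lam • ContinuousLinearMap.id ℂ (lp (fun _ : ℤ => ℂ) 2)) x) V) := by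
          rw [hxV, inner_self_eq_norm_sq]
      _ ≤ ‖inner ℂ ((B - lam • ContinuousLinearMap.id ℂ (lp (fun _ : ℤ => ℂ) 2)) x) V‖ :=
          RCLike.re_le_norm _
      _ = ‖∑ j ∈ Finset.Icc N (N+(L:ℤ)+1), (starRingEnd ℂ) (x j) * w j‖ := by rw [key]
      _ ≤ ∑ j ∈ Finset.Icc N (N+(L:ℤ)+1), ‖(starRingEnd ℂ) (x j) * w j‖ := norm_sum_le _ _
      _ = ∑ j ∈ Finset.Icc N (N+(L:ℤ)+1), ‖x j‖ * ‖w j‖ := by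
          apply Finset.sum_congr rfl
          intro j _
          rw [norm_mul, RCLike.norm_conj]
  have h6 : (∑ j ∈ Finset.Icc N (N+(L:ℤ)+1), ‖x j‖ * ‖w j‖)^2
      ≤ ‖x‖^2 * (17*‖lam‖^2) := by
    refine (Finset.sum_mul_sq_le_sq_mul_sq _ _ _).trans ?_
    have hxs := hrpow x (Finset.Icc N (N+(L:ℤ)+1))
    apply mul_le_mul hxs hsum_w (Finset.sum_nonneg fun j _ => sq_nonneg _) (by positivity)
  have hV2pos : 0 < ‖V‖^2 := lt_of_lt_of_le (by positivity) hnormV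
  have hX2 : ‖x‖^2 ≤ C^2*‖V‖^2 := by nlinarith [hxn, norm_nonneg x, norm_nonneg V, hC0]
  have h17 : 17*C^2*‖lam‖^2 < ((L:ℝ)+1)*(1/4) := by linarith
  have h18 : 17*C^2*‖lam‖^2 < ‖V‖^2 := lt_of_lt_of_le h17 hnormV
  have hA2 : ‖V‖^2 * ‖V‖^2 ≤ (∑ j ∈ Finset.Icc N (N+(L:ℤ)+1), ‖x j‖ * ‖w j‖)^2 := by
    nlinarith [h5, hV2pos]
  have hfin : ‖x‖^2 * (17*‖lam‖^2) ≤ (17*C^2*‖lam‖^2) * ‖V‖^2 := by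
    nlinarith [hX2, hlampos]
  have hlast : (17*C^2*‖lam‖^2) * ‖V‖^2 < ‖V‖^2 * ‖V‖^2 :=
    mul_lt_mul_of_pos_right h18 hV2pos
  linarith [hA2, h6, hfin, hlast]
end
end
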